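/- With g as in the explicit construction and h = (1−g)/10, for λ ∈ [0, 0.9] and any θ ∈ [0,1], the partial derivative with respect to θ of G(θ,λ) := (1−θ)(1−λ) + (1−λ)∫₀^θ (g−h) + ∫₀^λ (λ−y)g(y)dy + (1−θ)∫₀^λ (g−h) + ∫₀^λ (θ−y)g(y)dy, namely (1−λ)(g(θ)−h(θ)−1) + ∫₀^λ h(y)dy, is non-positive. -/
import Mathlib


/-- The explicit piecewise linear function `g` from the paper. -/
noncomputable def g (y : ℝ) : ℝ :=
  if y ≤ 0.13 then 0.365 * y + 0.48926
  else if y < 0.4 then 0.067 * y + 0.528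
  else 0.5548

/-- `h = (1 - g)/10`. -/
noncomputable def h (y : ℝ) : ℝ := (1 - g y) / 10

/-- `m = min {g - h, 1 - g}`. -/
noncomputable def m (y : ℝ) : ℝ := min (g y - h y) (1 - g y)

lemma g_eq : g = fun y => if y ≤ 0.13 then 0.365 * y + 0.48926
    else if y ≤ 0.4 then 0.067 * y + 0.528 else 0.5548 := by
  funext y
  unfold g
  split_ifs <;> first
    | rfl
    | linarith
    | (rename_i h2 h3
       have : y = 0.4 := le_antisymm h3 (not_lt.mp h2)
       rw [this]; norm_num)

lemma g_cont : Continuous g := by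
  rw [g_eq]
  apply Continuous.if_le
  · exact (continuous_const.mul continuous_id).add continuous_const
  · apply Continuous.if_le
    · exact (continuous_const.mul continuous_id).add continuous_const
    · exact continuous_const
    · exact continuous_id
    · exact continuous_const
    · intro x hx; rw [hx]; norm_num
  · exact continuous_id
  · exact continuous_const
  · intro x hx; rw [hx]; norm_num

lemma h_cont : Continuous h := by
  unfold h
  exact (continuous_const.sub g_cont).div_const 10

lemma g_lb {y : ℝ} (hy : 0 ≤ y) : 0.48926 ≤ g y := by
  unfold g
  split_ifs <;> nlinarith

lemma g_ub (y : ℝ) : g y ≤ 0.5548 := by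
  unfold g
  split_ifs <;> nlinarith

/-- For `λ ∈ [0, 0.9]` and `θ ∈ [0,1]`, the partial derivative
in `θ` of the bound of Equation (6), namely
`(1−λ)(g(θ)−h(θ)−1) + ∫₀^λ h(y) dy`, is non-positive. -/
theorem stmt14 (θ lam : ℝ) (hlam : lam ∈ Set.Icc (0:ℝ) 0.9) (hθ : θ ∈ Set.Icc (0:ℝ) 1) :
    (1 - lam) * (g θ - h θ - 1) + (∫ y in (0:ℝ)..lam, h y) ≤ 0 := by
  obtain ⟨hl0, hl1⟩ := hlam
  have hint : (∫ y in (0:ℝ)..lam, h y) ≤ 0.051074 * lam := by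
    have : (∫ y in (0:ℝ)..lam, h y) ≤ ∫ _y in (0:ℝ)..lam, (0.051074 : ℝ) := by
      apply intervalIntegral.integral_mono_on hl0
      · exact h_cont.intervalIntegrable _ _
      · exact intervalIntegrable_const
      · intro y hy
        have := g_lb hy.1
        unfold h; linarith
    simpa [mul_comm] using this
  have h1 : g θ - h θ - 1 = 1.1 * (g θ - 1) := by unfold h; ring
  have h2 := g_ub θ
  nlinarith [mul_nonneg (sub_nonneg.mpr hl1) (sub_nonneg.mpr h2)]
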